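/- arXiv:math-ph/0103037 — 6 statements merged into one kernel-verified Lean document; each statement's English description precedes it below -/
import Mathlib

section
/- Let g(s) = (e^s − 1)/s for s ≠ 0, extended by g(0) = 1, so that g is an entire function with power series g(s) = ∑_{j=0}^∞ s^j/(j+1)!. Then for every integer j ≥ 0 and every real number s, the j-th derivative satisfies g^{(j)}(s) > 0. -/
open MeasureTheory intervalIntegral Set Metric

/-- `g(s) = (e^s - 1)/s` for `s ≠ 0`, extended by `g(0) = 1`. -/
noncomputable def g (s : ℝ) : ℝ := if s = 0 then 1 else (Real.exp s - 1) / s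

lemma g_eq_integral (s : ℝ) : g s = ∫ t in (0:ℝ)..1, Real.exp (s * t) := by
  rcases eq_or_ne s 0 with h | h
  · simp [g, h]
  · have key : ∫ t in (0:ℝ)..1, Real.exp (s * t)
        = (fun t => Real.exp (s * t) / s) 1 - (fun t => Real.exp (s * t) / s) 0 := by
      apply intervalIntegral.integral_eq_sub_of_hasDerivAt (f := fun t => Real.exp (s * t) / s)
      · intro t _
        have h1 : HasDerivAt (fun t : ℝ => Real.exp (s * t) / s)
            (Real.exp (s * id t) * (s * 1) / s) t :=
          (((hasDerivAt_id t).const_mul s).exp).div_const s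
        exact h1.congr_deriv (by simp only [id_eq, mul_one]; exact mul_div_cancel_right₀ _ h)
      · exact (Real.continuous_exp.comp (continuous_const.mul continuous_id)).intervalIntegrable 0 1
    rw [key]
    simp only [mul_one, mul_zero, Real.exp_zero]
    simp [g, h]
    ring

lemma hasDerivAt_step (j : ℕ) (s : ℝ) :
    HasDerivAt (fun x : ℝ => ∫ t in (0:ℝ)..1, t ^ j * Real.exp (x * t))
      (∫ t in (0:ℝ)..1, t ^ (j + 1) * Real.exp (s * t)) s := by
  have cont : ∀ (k : ℕ) (x : ℝ), Continuous (fun t : ℝ => t ^ k * Real.exp (x * t)) :=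
    fun k x => (continuous_pow k).mul (Real.continuous_exp.comp (continuous_const.mul continuous_id))
  have h := intervalIntegral.hasDerivAt_integral_of_dominated_loc_of_deriv_le
    (F := fun x t => t ^ j * Real.exp (x * t))
    (F' := fun x t => t ^ (j + 1) * Real.exp (x * t))
    (μ := volume) (x₀ := s) (a := 0) (b := 1) (bound := fun _ => Real.exp (|s| + 1)) (s := ball s 1)
    (ball_mem_nhds s one_pos)
    (Filter.Eventually.of_forall fun x => ((cont j x).aestronglyMeasurable).restrict)
    ((cont j s).intervalIntegrable 0 1)
    ((cont (j+1) s).aestronglyMeasurable).restrict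
    ?_ ?_ ?_
  · exact h.2
  · refine Filter.Eventually.of_forall fun t ht x hx => ?_
    rw [Set.uIoc_of_le (by norm_num : (0:ℝ) ≤ 1)] at ht
    have ht0 : 0 < t := ht.1
    have ht1 : t ≤ 1 := ht.2
    have hb : x * t ≤ |s| + 1 := by
      have hxb : |x| ≤ |s| + 1 := by
        have := mem_ball_iff_norm.mp hx
        have : |x - s| < 1 := by simpa [Real.norm_eq_abs] using this
        calc |x| = |x - s + s| := by ring_nf
          _ ≤ |x - s| + |s| := abs_add_le _ _
          _ ≤ |s| + 1 := by linarith
      calc x * t ≤ |x * t| := le_abs_self _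
        _ = |x| * |t| := abs_mul _ _
        _ ≤ (|s| + 1) * 1 := by
            apply mul_le_mul hxb (by rw [abs_of_pos ht0]; exact ht1) (abs_nonneg _) (by positivity)
        _ = |s| + 1 := mul_one _
    have htp : t ^ (j+1) ≤ 1 := pow_le_one₀ ht0.le ht1
    have : |t ^ (j+1) * Real.exp (x * t)| = t ^ (j+1) * Real.exp (x * t) := by
      rw [abs_of_nonneg]; positivity
    rw [Real.norm_eq_abs, this]
    calc t ^ (j+1) * Real.exp (x * t) ≤ 1 * Real.exp (|s| + 1) := by
          apply mul_le_mul htp (Real.exp_le_exp.mpr hb) (Real.exp_pos _).le one_pos.le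
      _ = Real.exp (|s| + 1) := one_mul _
  · exact intervalIntegrable_const
  · refine Filter.Eventually.of_forall fun t ht x hx => ?_
    have h1 : HasDerivAt (fun x : ℝ => t ^ j * Real.exp (x * t))
        (t ^ j * (Real.exp (x * t) * (1 * t))) x :=
      (((hasDerivAt_id x).mul_const t).exp).const_mul (t ^ j)
    exact h1.congr_deriv (by ring)

lemma iteratedDeriv_g_eq (j : ℕ) :
    iteratedDeriv j g = fun s => ∫ t in (0:ℝ)..1, t ^ j * Real.exp (s * t) := by
  induction j with
  | zero =>
    funext s
    simpa [iteratedDeriv_zero] using g_eq_integral s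
  | succ j ih =>
    funext s
    rw [iteratedDeriv_succ, ih]
    exact (hasDerivAt_step j s).deriv

/-- Every derivative of `g` is strictly positive on all of `ℝ`. -/
theorem su11_iteratedDeriv_g_pos (j : ℕ) (s : ℝ) : 0 < iteratedDeriv j g s := by
  rw [iteratedDeriv_g_eq]
  apply intervalIntegral_pos_of_pos_on
  · exact ((continuous_pow j).mul
      (Real.continuous_exp.comp (continuous_const.mul continuous_id))).intervalIntegrable 0 1
  · intro t ht
    have : 0 < t := ht.1
    positivity
  · norm_num
end

section
/- Let g(s) = (e^s − 1)/s for s ≠ 0, extended by g(0) = 1. Then for every integer j ≥ 0 and every real s > 0, the j-th derivative of g satisfies the identity g^{(j)}(−s) = (j!/s^{j+1})·[1 − e^{−s}·(1 + s/1! + s²/2! + ⋯ + s^j/j!)]. -/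
noncomputable def Saux (j : ℕ) (x : ℝ) : ℝ :=
  ∑ k ∈ Finset.range (j + 1), (-x) ^ k / (k.factorial : ℝ)

noncomputable def Paux (j : ℕ) (x : ℝ) : ℝ :=
  ((-1 : ℝ) ^ (j + 1) * (j.factorial : ℝ)) / x ^ (j + 1) * (1 - Real.exp x * Saux j x)

lemma hasDerivAt_Saux (j : ℕ) (x : ℝ) :
    HasDerivAt (Saux j) ((-x) ^ j / (j.factorial : ℝ) - Saux j x) x := by
  induction j with
  | zero =>
      have h : HasDerivAt (fun _ : ℝ => (1 : ℝ)) 0 x := hasDerivAt_const x 1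
      have he : Saux 0 = fun _ : ℝ => (1 : ℝ) := by
        funext y; simp [Saux]
      rw [he]
      simpa [he] using h
  | succ j ih =>
      have h0 := ((hasDerivAt_id x).neg.pow (j + 1)).div_const (((j + 1).factorial : ℝ))
      have key : Saux (j + 1) x = Saux j x + (-x) ^ (j + 1) / ((j + 1).factorial : ℝ) := by
        simp [Saux, Finset.sum_range_succ]
      have he : Saux (j + 1) = fun y => Saux j y + (-y) ^ (j + 1) / ((j + 1).factorial : ℝ) := by
        funext y; simp [Saux, Finset.sum_range_succ]
      rw [key, he]
      refine (ih.add h0).congr_deriv ?_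
      have hfac : (((j + 1).factorial : ℝ)) = ((j : ℝ) + 1) * (j.factorial : ℝ) := by
        rw [Nat.factorial_succ]; push_cast; ring
      have hj : (j.factorial : ℝ) ≠ 0 := Nat.cast_ne_zero.mpr (Nat.factorial_ne_zero j)
      have hneg : ∀ n : ℕ, (-x) ^ n = (-1 : ℝ) ^ n * x ^ n := fun n => by rw [neg_pow]
      simp only [id_eq, Pi.neg_apply, Nat.add_sub_cancel, hneg, hfac]
      push_cast
      field_simp
      ring

lemma hasDerivAt_Paux (j : ℕ) (x : ℝ) (hx : x ≠ 0) :
    HasDerivAt (Paux j) (Paux (j + 1) x) x := by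
  have hxp : x ^ (j + 1) ≠ 0 := pow_ne_zero _ hx
  have hS := hasDerivAt_Saux j x
  have hu : HasDerivAt (fun y => Real.exp y * Saux j y)
      (Real.exp x * (-x) ^ j / (j.factorial : ℝ)) x := by
    have := (Real.hasDerivAt_exp x).mul hS
    exact this.congr_deriv (by ring)
  have hv := (hasDerivAt_const x (1 : ℝ)).sub hu
  have hc : HasDerivAt (fun y : ℝ => ((-1 : ℝ) ^ (j + 1) * (j.factorial : ℝ)) / y ^ (j + 1))
      ((0 * x ^ (j+1) - ((-1 : ℝ) ^ (j + 1) * (j.factorial : ℝ)) *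
        (((j + 1 : ℕ) : ℝ) * x ^ j)) / (x ^ (j+1)) ^ 2) x := by
    exact (hasDerivAt_const x _ ).div (hasDerivAt_pow (j+1) x) hxp
  have hP := hc.mul hv
  have he : Paux j = fun y =>
      ((-1 : ℝ) ^ (j + 1) * (j.factorial : ℝ)) / y ^ (j + 1) * (1 - Real.exp y * Saux j y) := by
    funext y; rfl
  rw [he]
  refine hP.congr_deriv ?_
  have hfac : (((j + 1).factorial : ℝ)) = ((j : ℝ) + 1) * (j.factorial : ℝ) := by
    rw [Nat.factorial_succ]; push_cast; ring
  have hj : (j.factorial : ℝ) ≠ 0 := Nat.cast_ne_zero.mpr (Nat.factorial_ne_zero j)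
  have hS1 : Saux (j+1) x = Saux j x + (-x) ^ (j + 1) / ((j + 1).factorial : ℝ) := by
    simp [Saux, Finset.sum_range_succ]
  have hneg : ∀ n : ℕ, (-x) ^ n = (-1 : ℝ) ^ n * x ^ n := fun n => by rw [neg_pow]
  rw [Paux, hS1, hfac, hneg j, hneg (j+1)]
  simp only [Pi.sub_apply]
  push_cast
  field_simp
  ring

lemma iteratedDeriv_g_eq_s1 (j : ℕ) : ∀ x : ℝ, x < 0 → iteratedDeriv j g x = Paux j x := by
  induction j with
  | zero =>
      intro x hx
      have hx' : x ≠ 0 := ne_of_lt hx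
      simp only [iteratedDeriv_zero, g, if_neg hx', Paux, Saux]
      simp only [zero_add, Finset.sum_range_one, pow_zero, Nat.factorial_zero, Nat.cast_one, pow_one]
      field_simp
      ring
  | succ j ih =>
      intro x hx
      have hx' : x ≠ 0 := ne_of_lt hx
      rw [iteratedDeriv_succ]
      have hev : iteratedDeriv j g =ᶠ[nhds x] Paux j := by
        filter_upwards [IsOpen.mem_nhds isOpen_Iio hx] with y hy using ih y hy
      rw [hev.deriv_eq]
      exact (hasDerivAt_Paux j x hx').deriv

/-- For `s > 0`,
`g^{(j)}(-s) = (j!/s^{j+1}) ⬝ [1 - e^{-s}(1 + s/1! + s²/2! + ⋯ + s^j/j!)]`. -/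
theorem su11_iteratedDeriv_g_neg_formula (j : ℕ) (s : ℝ) (hs : 0 < s) :
    iteratedDeriv j g (-s) =
      ((j.factorial : ℝ) / s ^ (j + 1)) *
        (1 - Real.exp (-s) * ∑ k ∈ Finset.range (j + 1), s ^ k / (k.factorial : ℝ)) := by
  have h := iteratedDeriv_g_eq_s1 j (-s) (by linarith)
  rw [h, Paux, Saux]
  have hs' : s ≠ 0 := ne_of_gt hs
  simp only [neg_neg]
  rw [show (-s : ℝ) ^ (j + 1) = (-1 : ℝ) ^ (j+1) * s ^ (j+1) by rw [neg_pow]]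
  have h1 : ((-1 : ℝ) ^ (j + 1)) ≠ 0 := by positivity
  field_simp
end

section
/- Fix an integer L ≥ 1 and a real number s. With ℱ_{N,L}(x) = ∑_{m=0}^{N} C(m+L−1, m) x^m, one has lim_{N→∞} (L−1)!·N^{−L}·ℱ_{N,L}(1 + s/N) = g^{(L−1)}(s). -/
open Filter Finset Topology FormalMultilinearSeries

/-- `ℱ_{N,L}(x) = ∑_{m=0}^N C(m+L-1, m) x^m`. -/
noncomputable def F (L N : ℕ) (x : ℝ) : ℝ :=
  ∑ m ∈ Finset.range (N + 1), (Nat.choose (m + L - 1) m : ℝ) * x ^ m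

noncomputable def cf (k : ℕ) : ℕ → ℝ := fun n => 1 / (n.factorial * (n + k + 1))

noncomputable def ps (k : ℕ) : FormalMultilinearSeries ℝ ℝ ℝ := ofScalars ℝ (cf k)

noncomputable def G (k : ℕ) : ℝ → ℝ := ofScalarsSum (cf k)

lemma cf_pos (k n : ℕ) : 0 < cf k n := by
  unfold cf; positivity

lemma radius_ps (k : ℕ) : (ps k).radius = ⊤ := by
  apply ofScalars_radius_eq_top_of_tendsto
  · exact Eventually.of_forall fun n => (cf_pos k n).ne'
  · have h : ∀ n : ℕ, ‖cf k n.succ‖ / ‖cf k n‖ ≤ 1 / (n + 1 : ℝ) := by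
      intro n
      have fne : (n.factorial : ℝ) ≠ 0 := Nat.cast_ne_zero.mpr n.factorial_ne_zero
      have h1 : ‖cf k n.succ‖ / ‖cf k n‖ = ((n:ℝ)+k+1)/(((n:ℝ)+1)*((n:ℝ)+k+2)) := by
        rw [Real.norm_of_nonneg (cf_pos k _).le, Real.norm_of_nonneg (cf_pos k _).le]
        unfold cf
        rw [Nat.factorial_succ]
        push_cast
        field_simp
        ring
      rw [h1, div_le_div_iff₀ (by positivity) (by positivity)]
      nlinarith [(Nat.cast_nonneg n : (0:ℝ) ≤ n), (Nat.cast_nonneg k : (0:ℝ) ≤ k)]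
    refine squeeze_zero (fun n => by positivity) h ?_
    exact tendsto_one_div_add_atTop_nhds_zero_nat

lemma hG (k : ℕ) : HasFPowerSeriesOnBall (G k) (ps k) 0 ⊤ := by
  have h := (ps k).hasFPowerSeriesOnBall (by rw [radius_ps]; exact ENNReal.zero_lt_top)
  rw [radius_ps] at h
  exact h

lemma hasSum_G (k : ℕ) (x : ℝ) : HasSum (fun n => cf k n * x ^ n) (G k x) := by
  have h := (hG k).hasSum (y := x) (by simp [EMetric.mem_ball, edist_lt_top])
  simp only [zero_add] at h
  refine h.congr_fun fun n => ?_
  rw [ps, ofScalars_apply_eq, smul_eq_mul]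

lemma cf_succ (k n : ℕ) : ((n:ℝ) + 1) * cf k (n+1) = cf (k+1) n := by
  unfold cf
  rw [Nat.factorial_succ]
  have fne : (n.factorial : ℝ) ≠ 0 := Nat.cast_ne_zero.mpr n.factorial_ne_zero
  push_cast
  field_simp
  ring

lemma deriv_G (k : ℕ) : deriv (G k) = G (k+1) := by
  funext y
  have hd := (hG k).fderiv
  have hs := hd.hasSum (y := y) (by simp [EMetric.mem_ball, edist_lt_top])
  simp only [zero_add] at hs
  have hs2 := (ContinuousLinearMap.apply ℝ ℝ (1:ℝ)).hasSum hs
  have key : ∀ n, (ContinuousLinearMap.apply ℝ ℝ (1:ℝ))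
      ((ps k).derivSeries n fun _ => y) = cf (k+1) n * y ^ n := by
    intro n
    have h1 : (fun _ : Fin n => y) = fun _ : Fin n => y • (1:ℝ) := by simp
    rw [ContinuousLinearMap.apply_apply, h1, ContinuousMultilinearMap.map_smul_univ]
    simp only [Finset.prod_const, Finset.card_univ, Fintype.card_fin,
      ContinuousLinearMap.smul_apply, smul_eq_mul]
    have h2 : ((ps k).derivSeries n fun _ => (1:ℝ)) 1 = (n+1) • ps k (n+1) fun _ => (1:ℝ) :=
      derivSeries_apply_diag _ n 1
    rw [h2, ps, ofScalars_apply_eq]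
    simp only [one_pow, smul_eq_mul, nsmul_eq_mul]
    push_cast
    rw [mul_one, cf_succ]
    ring
  rw [← fderiv_apply_one_eq_deriv]
  have hs3 : HasSum (fun n => cf (k+1) n * y ^ n) (fderiv ℝ (G k) y 1) := by
    refine hs2.congr_fun fun n => (key n).symm ▸ rfl
  exact (hs3.unique (hasSum_G (k+1) y))

lemma g_eq : g = G 0 := by
  funext x
  by_cases hx : x = 0
  · subst hx
    simp [g, G, cf, ofScalarsSum_zero]
  · have h := (hasSum_G 0 x).mul_left x
    have he : HasSum (fun n : ℕ => x ^ n / n.factorial) (Real.exp x) := by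
      rw [Real.exp_eq_exp_ℝ]
      exact NormedSpace.expSeries_div_hasSum_exp x
    have he1 : HasSum (fun n : ℕ => x ^ (n+1) / (n+1).factorial) (Real.exp x - 1) := by
      have h2 := (hasSum_nat_add_iff' (f := fun n : ℕ => x ^ n / n.factorial) 1).mpr he
      simpa using h2
    have heq : (fun n : ℕ => x * (cf 0 n * x ^ n)) = fun n : ℕ => x ^ (n+1) / (n+1).factorial := by
      funext n
      have fne : (n.factorial : ℝ) ≠ 0 := Nat.cast_ne_zero.mpr n.factorial_ne_zero
      unfold cf
      rw [Nat.factorial_succ, pow_succ]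
      push_cast
      field_simp
      ring
    rw [heq] at h
    have hx2 : x * G 0 x = Real.exp x - 1 := h.unique he1
    have : G 0 x = (Real.exp x - 1) / x := by
      field_simp
      linarith [hx2]
    rw [g, if_neg hx, this]

lemma iter_g (k : ℕ) : iteratedDeriv k g = G k := by
  induction k with
  | zero => rw [iteratedDeriv_zero, g_eq]
  | succ n ih => rw [iteratedDeriv_succ, ih, deriv_G]

lemma hockey (K j : ℕ) : ∀ N, ∑ m ∈ range (N+1), ((m+K).choose (K+j)) = (N+K+1).choose (K+j+1) := by
  intro N
  induction N with
  | zero =>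
    simp only [range_one, sum_singleton, zero_add]
    rcases Nat.eq_zero_or_pos j with hj | hj
    · subst hj; simp
    · rw [Nat.choose_eq_zero_of_lt (by omega), Nat.choose_eq_zero_of_lt (by omega)]
  | succ N ih =>
    rw [sum_range_succ, ih]
    have e : N+1+K = N+K+1 := by omega
    rw [e, Nat.choose_succ_succ (N+K+1) (K+j)]
    simp only [Nat.succ_eq_add_one]
    omega

lemma perterm (K j m : ℕ) : (m+K).choose K * m.choose j = (m+K).choose (K+j) * (K+j).choose K := by
  by_cases hjm : j ≤ m
  · have h := Nat.choose_mul (n := m+K) (k := K+j) (s := K) (by omega)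
    rw [Nat.add_sub_cancel_left, Nat.add_sub_cancel] at h
    omega
  · rw [Nat.choose_eq_zero_of_lt (show m < j by omega),
      Nat.choose_eq_zero_of_lt (show m+K < K+j by omega)]
    simp

lemma sum_id (K N j : ℕ) :
    ∑ m ∈ range (N+1), (m+K).choose K * m.choose j
      = (K+j).choose j * (N+K+1).choose (K+j+1) := by
  calc ∑ m ∈ range (N+1), (m+K).choose K * m.choose j
      = ∑ m ∈ range (N+1), (m+K).choose (K+j) * (K+j).choose K := by
        exact sum_congr rfl fun m _ => perterm K j m
    _ = (∑ m ∈ range (N+1), (m+K).choose (K+j)) * (K+j).choose K := by rw [sum_mul]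
    _ = (K+j).choose j * (N+K+1).choose (K+j+1) := by
        rw [hockey, Nat.choose_symm_add]
        ring

lemma F_eq (K N : ℕ) (u : ℝ) :
    F (K+1) N (1+u) = ∑ j ∈ range (N+1),
      (((K+j).choose j * (N+K+1).choose (K+j+1) : ℕ) : ℝ) * u^j := by
  unfold F
  have step1 : ∀ m ∈ range (N+1), ((m + (K+1) - 1).choose m : ℝ) * (1+u)^m
      = ∑ j ∈ range (N+1), ((m+K).choose K * m.choose j : ℕ) * u^j := by
    intro m hm
    rw [mem_range] at hm
    have hm' : m ≤ N := by omega
    have e1 : m + (K+1) - 1 = m + K := by omega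
    have e2 : (1+u)^m = ∑ j ∈ range (N+1), (m.choose j : ℝ) * u^j := by
      rw [add_comm 1 u, add_pow]
      rw [← Finset.sum_subset (Finset.range_subset_range.mpr (by omega : m+1 ≤ N+1))
        (fun x _ hx => by
          rw [Nat.choose_eq_zero_of_lt (by simp at hx ⊢; omega)]
          simp)]
      exact sum_congr rfl fun j _ => by rw [one_pow]; ring
    rw [e1, e2, Finset.mul_sum]
    refine sum_congr rfl fun j _ => ?_
    rw [Nat.choose_symm_add (a := m) (b := K)]
    push_cast [mul_comm]
    ring
  rw [sum_congr rfl step1, Finset.sum_comm]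
  refine sum_congr rfl fun j _ => ?_
  rw [← Finset.sum_mul, ← Nat.cast_sum, sum_id]

lemma choose_div_pow_tendsto (c k : ℕ) :
    Tendsto (fun N : ℕ => ((N + c).choose k : ℝ) / (N : ℝ) ^ k)
      atTop (𝓝 (1 / (k.factorial : ℝ))) := by
  have hfac : ∀ i ∈ range k, Tendsto (fun N : ℕ => ((N : ℝ) + c - i) / N) atTop (𝓝 1) := by
    intro i _
    have h1 : Tendsto (fun N : ℕ => 1 + ((c : ℝ) - i) * (1 / N)) atTop (𝓝 (1 + ((c:ℝ) - i) * 0)) :=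
      tendsto_const_nhds.add (tendsto_const_nhds.mul tendsto_one_div_atTop_nhds_zero_nat)
    rw [mul_zero, add_zero] at h1
    refine h1.congr' ?_
    filter_upwards [eventually_ge_atTop 1] with N hN
    have hN0 : (N : ℝ) ≠ 0 := by positivity
    field_simp
    ring
  have hprod : Tendsto (fun N : ℕ => ∏ i ∈ range k, ((N : ℝ) + c - i) / N) atTop
      (𝓝 (∏ _i ∈ range k, (1:ℝ))) := tendsto_finset_prod _ hfac
  rw [Finset.prod_const_one] at hprod
  have hmul := hprod.const_mul (1 / (k.factorial : ℝ))
  rw [mul_one] at hmul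
  refine hmul.congr' ?_
  filter_upwards [eventually_ge_atTop k, eventually_ge_atTop 1] with N hNk hN1
  have hN0 : (N : ℝ) ≠ 0 := by positivity
  have hd : (N + c).descFactorial k = ∏ i ∈ range k, (N + c - i) := Nat.descFactorial_eq_prod_range _ _
  have hc : (k.factorial : ℝ) * ((N + c).choose k : ℝ) = ∏ i ∈ range k, ((N : ℝ) + c - i) := by
    rw [← Nat.cast_mul, ← Nat.descFactorial_eq_factorial_mul_choose, hd, Nat.cast_prod]
    refine Finset.prod_congr rfl fun i hi => ?_
    rw [mem_range] at hi
    have : (i : ℕ) ≤ N + c := by omega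
    push_cast [Nat.cast_sub this]
    ring
  have hkf : (k.factorial : ℝ) ≠ 0 := Nat.cast_ne_zero.mpr k.factorial_ne_zero
  rw [Finset.prod_div_distrib, Finset.prod_const, ← hc]
  field_simp
  rw [Finset.card_range]

lemma natfac (K j : ℕ) :
    K.factorial * ((K+j).choose j) * j.factorial * (j+K+1) = (K+j+1).factorial := by
  have h := Nat.choose_mul_factorial_mul_factorial (show j ≤ K+j by omega)
  rw [Nat.add_sub_cancel] at h
  rw [Nat.factorial_succ, ← h]
  ring

lemma natIneq (K j N : ℕ) (h : K+1 ≤ N) :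
    (K.factorial * ((K+j).choose j) * ((N+K+1).choose (K+j+1))) * j.factorial
      ≤ (2*N)^(K+1+j) := by
  have h1 : (K+j).choose j * j.factorial * K.factorial = (K+j).factorial := by
    have h2 := Nat.choose_mul_factorial_mul_factorial (show j ≤ K+j by omega)
    rwa [Nat.add_sub_cancel] at h2
  calc (K.factorial * ((K+j).choose j) * ((N+K+1).choose (K+j+1))) * j.factorial
      = ((K+j).choose j * j.factorial * K.factorial) * ((N+K+1).choose (K+j+1)) := by ring
    _ = (K+j).factorial * ((N+K+1).choose (K+j+1)) := by rw [h1]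
    _ ≤ (K+j+1).factorial * ((N+K+1).choose (K+j+1)) := by
        exact Nat.mul_le_mul_right _ (Nat.factorial_le (by omega))
    _ = (N+K+1).descFactorial (K+j+1) := (Nat.descFactorial_eq_factorial_mul_choose _ _).symm
    _ ≤ (N+K+1)^(K+j+1) := Nat.descFactorial_le_pow _ _
    _ ≤ (2*N)^(K+j+1) := Nat.pow_le_pow_left (by omega) _
    _ = (2*N)^(K+1+j) := by rw [show K+j+1 = K+1+j by omega]

/-- `(L-1)! N^{-L} ℱ_{N,L}(1 + s/N) → g^{(L-1)}(s)` as `N → ∞`. -/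
theorem su11_F_asymptotics (L : ℕ) (hL : 1 ≤ L) (s : ℝ) :
    Filter.Tendsto
      (fun N : ℕ => ((L - 1).factorial : ℝ) / (N : ℝ) ^ L * F L N (1 + s / N))
      Filter.atTop (nhds (iteratedDeriv (L - 1) g s)) := by
  obtain ⟨K, rfl⟩ : ∃ K, L = K + 1 := ⟨L - 1, by omega⟩
  simp only [Nat.add_sub_cancel, iter_g]
  set A : ℕ → ℕ → ℝ := fun N j =>
    ((K.factorial * ((K+j).choose j) * ((N+K+1).choose (K+j+1)) : ℕ) : ℝ) * s^j / (N:ℝ)^(K+1+j)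
    with hA
  set f : ℕ → ℕ → ℝ := fun N j => if j ≤ N then A N j else 0 with hf
  have key : Tendsto (fun N => ∑' j, f N j) atTop (𝓝 (∑' j, cf K j * s^j)) := by
    apply tendsto_tsum_of_dominated_convergence
      (bound := fun j => (2:ℝ)^(K+1) * (2*|s|)^j / j.factorial)
    · simpa [mul_div_assoc] using
        (Real.summable_pow_div_factorial (2*|s|)).mul_left ((2:ℝ)^(K+1))
    · intro j
      have hTc : Tendsto (fun N : ℕ => ((N+K+1).choose (K+j+1) : ℝ) / (N:ℝ)^(K+1+j)) atTop
          (𝓝 (1 / ((K+j+1).factorial : ℝ))) := by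
        have h := choose_div_pow_tendsto (K+1) (K+j+1)
        refine h.congr fun N => ?_
        rw [show N + (K+1) = N + K + 1 by omega, show K+j+1 = K+1+j by omega]
      have hmul := hTc.const_mul (((K.factorial * ((K+j).choose j) : ℕ) : ℝ) * s^j)
      have hval : (((K.factorial * ((K+j).choose j) : ℕ) : ℝ) * s^j) * (1 / ((K+j+1).factorial : ℝ))
          = cf K j * s^j := by
        have hn : (K.factorial : ℝ) * ((K+j).choose j : ℝ) * (j.factorial : ℝ) * ((j:ℝ)+(K:ℝ)+1)
            = ((K+j+1).factorial : ℝ) := by exact_mod_cast natfac K j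
        have hfj : (j.factorial : ℝ) ≠ 0 := Nat.cast_ne_zero.mpr j.factorial_ne_zero
        have hfk : ((K+j+1).factorial : ℝ) ≠ 0 := Nat.cast_ne_zero.mpr (K+j+1).factorial_ne_zero
        unfold cf
        push_cast
        field_simp
        linear_combination s^j * hn
      rw [hval] at hmul
      refine hmul.congr' ?_
      filter_upwards [eventually_ge_atTop j] with N hN
      rw [hf]
      simp only [if_pos hN, hA]
      push_cast
      ring
    · filter_upwards [eventually_ge_atTop (K+1)] with N hN
      intro j
      by_cases hj : j ≤ N
      · have hN1 : 1 ≤ N := by omega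
        have hN0 : (0:ℝ) < (N:ℝ) := by exact_mod_cast hN1
        simp only [hf, if_pos hj, hA, Real.norm_eq_abs]
        rw [abs_div, abs_mul, abs_pow, Nat.abs_cast, abs_of_pos (by positivity : (0:ℝ) < (N:ℝ)^(K+1+j))]
        rw [div_le_div_iff₀ (by positivity) (by positivity)]
        calc ((K.factorial * ((K+j).choose j) * ((N+K+1).choose (K+j+1)) : ℕ) : ℝ) * |s|^j * j.factorial
            = (((K.factorial * ((K+j).choose j) * ((N+K+1).choose (K+j+1))) * j.factorial : ℕ) : ℝ) * |s|^j := by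
              push_cast; ring
          _ ≤ (((2*N)^(K+1+j) : ℕ) : ℝ) * |s|^j :=
              mul_le_mul_of_nonneg_right (Nat.cast_le.mpr (natIneq K j N hN)) (by positivity)
          _ = (2:ℝ)^(K+1) * (2*|s|)^j * (N:ℝ)^(K+1+j) := by
              push_cast
              rw [mul_pow, mul_pow, pow_add]
              ring
      · simp only [hf, if_neg hj, norm_zero]
        positivity
  have hGs : (∑' j, cf K j * s^j) = G K s := (hasSum_G K s).tsum_eq
  rw [hGs] at key
  refine key.congr' ?_
  filter_upwards [eventually_ge_atTop 1] with N hN1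
  have hN0 : (N:ℝ) ≠ 0 := by positivity
  have hsum : (∑' j, f N j) = ∑ j ∈ range (N+1), A N j := by
    rw [tsum_eq_sum (s := range (N+1)) (fun j hj => by
      rw [hf]; simp only [mem_range, not_lt] at hj; exact if_neg (by omega))]
    exact sum_congr rfl fun j hj => by
      rw [hf]; exact if_pos (by simp at hj; omega)
  rw [hsum, F_eq K N (s/N), Finset.mul_sum]
  refine sum_congr rfl fun j hj => ?_
  rw [hA]
  push_cast
  rw [div_pow, pow_add]
  field_simp
end

section
/- Fix an integer L ≥ 1 and a real number r with 0 < r < 1. Define the 2×2 complex matrices A₂ = [[1, 1], [1, (1−r²)^{−L}]], B₂ = [[0, 0], [L·r, L·r·(1−r²)^{−L−1}]], C₂ = [[L, L], [L, L·(1+L·r²)·(1−r²)^{−L−2}]], and Λ₂ = C₂ − B₂*·A₂^{−1}·B₂ (where B₂* is the conjugate transpose). Then the normalized two-point correlation k₂ := ((Λ₂)₁₁·(Λ₂)₂₂ + (Λ₂)₁₂·(Λ₂)₂₁)·(1−r²)² / (L²·det A₂) equals [ (1−r²)^{3L+2} + ((L²−2L−2)r⁴ + (4L+4)r² − 1)·(1−r²)^{2L}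 + ((L+1)²r⁴ − (4L+2)r² − 1)·(1−r²)^{L} + 1 ] / (1 − (1−r²)^L)³. -/
open Matrix

set_option maxHeartbeats 8000000 in
/-- The Kac–Rice computation of the normalized two-point correlation function of
zeros of the `SU(1,1)` random analytic function, at the points `z₁ = 0`, `z₂ = r`:
with `A₂, B₂, C₂` the explicit covariance matrices and `Λ₂ = C₂ - B₂ᴴ A₂⁻¹ B₂`,
the quantity `((Λ₂)₁₁(Λ₂)₂₂ + (Λ₂)₁₂(Λ₂)₂₁)(1-r²)²/(L² det A₂)` equals the explicit
rational expression in `r` and `(1-r²)^L`. -/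
theorem su11_two_point_correlation (L : ℕ) (hL : 1 ≤ L) (r : ℝ) (h0 : 0 < r) (h1 : r < 1) :
    let x : ℂ := 1 - (r : ℂ) ^ 2
    let A₂ : Matrix (Fin 2) (Fin 2) ℂ := !![1, 1; 1, (x ^ L)⁻¹]
    let B₂ : Matrix (Fin 2) (Fin 2) ℂ :=
      !![0, 0; (L : ℂ) * (r : ℂ), (L : ℂ) * (r : ℂ) * (x ^ (L + 1))⁻¹]
    let C₂ : Matrix (Fin 2) (Fin 2) ℂ :=
      !![(L : ℂ), (L : ℂ); (L : ℂ),
         (L : ℂ) * (1 + (L : ℂ) * (r : ℂ) ^ 2) * (x ^ (L + 2))⁻¹]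
    let Λ₂ : Matrix (Fin 2) (Fin 2) ℂ := C₂ - B₂ᴴ * A₂⁻¹ * B₂
    (Λ₂ 0 0 * Λ₂ 1 1 + Λ₂ 0 1 * Λ₂ 1 0) * x ^ 2 / ((L : ℂ) ^ 2 * A₂.det) =
      (x ^ (3 * L + 2) +
          (((L : ℂ) ^ 2 - 2 * L - 2) * (r : ℂ) ^ 4 + (4 * L + 4) * (r : ℂ) ^ 2 - 1) *
            x ^ (2 * L) +
          (((L : ℂ) + 1) ^ 2 * (r : ℂ) ^ 4 - (4 * L + 2) * (r : ℂ) ^ 2 - 1) * x ^ L + 1) /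
        (1 - x ^ L) ^ 3 := by
  intro x A₂ B₂ C₂ Λ₂
  have hx0 : (0:ℝ) < 1 - r ^ 2 := by nlinarith
  have hx1 : (1 - r ^ 2 : ℝ) < 1 := by nlinarith
  have hx_eq : x = ((1 - r ^ 2 : ℝ) : ℂ) := by push_cast; ring
  have hx : x ≠ 0 := by
    rw [hx_eq]
    exact Complex.ofReal_ne_zero.mpr (ne_of_gt hx0)
  have hxL : x ^ L ≠ 0 := pow_ne_zero _ hx
  have hxL1 : x ^ L ≠ 1 := by
    rw [hx_eq, ← Complex.ofReal_pow]
    intro h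
    have h2 : (1 - r ^ 2 : ℝ) ^ L = 1 := by exact_mod_cast h
    nlinarith [pow_lt_one₀ (le_of_lt hx0) hx1 (show L ≠ 0 by omega)]
  have key : 1 - x ^ L ≠ 0 := fun h => hxL1 (by linear_combination -h)
  have hdet : A₂.det = (x ^ L)⁻¹ - 1 := by
    simp [A₂, Matrix.det_fin_two_of]
  have hd : (x ^ L)⁻¹ - 1 ≠ 0 := by
    intro h
    exact hxL1 (inv_eq_one.mp (sub_eq_zero.mp h))
  have hdetne : A₂.det ≠ 0 := by rw [hdet]; exact hd
  have hAinv : A₂⁻¹ = ((x ^ L)⁻¹ - 1)⁻¹ • !![(x ^ L)⁻¹, -1; -1, 1] := by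
    rw [Matrix.inv_def, hdet]
    congr 1
    · simp [Ring.inverse_eq_inv']
    · simp [A₂, Matrix.adjugate_fin_two]
  have hL0 : (L : ℂ) ≠ 0 := Nat.cast_ne_zero.mpr (by omega)
  have i1 : ((x ^ L)⁻¹ - 1)⁻¹ = x ^ L * (1 - x ^ L)⁻¹ :=
    inv_eq_of_mul_eq_one_right (by field_simp)
  have i2 : (x ^ L)⁻¹ - 1 = (1 - x ^ L) * (x ^ L)⁻¹ := by
    field_simp
  have hcx : (starRingEnd ℂ) x = x := by rw [hx_eq]; exact Complex.conj_ofReal _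
  have hr2 : (r : ℂ) ^ 2 = 1 - x := by rw [hx_eq]; push_cast; ring
  have hr4 : (r : ℂ) ^ 4 = (1 - x) ^ 2 := by
    rw [show 4 = 2 * 2 from rfl, pow_mul, hr2]
  clear_value x
  obtain ⟨y, hy⟩ : ∃ y : ℂ, y = x ^ L := ⟨_, rfl⟩
  have hyne : y ≠ 0 := by rw [hy]; exact hxL
  have hKy : 1 - y ≠ 0 := by rw [hy]; exact key
  have e00 : Λ₂ 0 0 = ((L : ℂ) * (1 - y) - (L : ℂ) ^ 2 * (r : ℂ) ^ 2 * y) / (1 - y) := by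
    simp only [Λ₂, hAinv, Matrix.sub_apply, Matrix.mul_apply, Matrix.smul_apply,
      Matrix.conjTranspose_apply, Fin.sum_univ_two, B₂, C₂,
      Matrix.of_apply, Matrix.cons_val', Matrix.cons_val_zero, Matrix.cons_val_one,
      Matrix.head_cons, Matrix.head_fin_const, Matrix.cons_val_fin_one, Matrix.empty_val',
      smul_eq_mul, Complex.star_def, _root_.map_mul, map_zero, map_natCast,
      Complex.conj_ofReal, map_inv₀, map_pow, i1, hcx, pow_succ, mul_inv]
    rw [← hy]
    field_simp
    ring
  have e01 : Λ₂ 0 1 = ((L : ℂ) * x * (1 - y) - (L : ℂ) ^ 2 * (r : ℂ) ^ 2) / (x * (1 - y)) := by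
    simp only [Λ₂, hAinv, Matrix.sub_apply, Matrix.mul_apply, Matrix.smul_apply,
      Matrix.conjTranspose_apply, Fin.sum_univ_two, B₂, C₂,
      Matrix.of_apply, Matrix.cons_val', Matrix.cons_val_zero, Matrix.cons_val_one,
      Matrix.head_cons, Matrix.head_fin_const, Matrix.cons_val_fin_one, Matrix.empty_val',
      smul_eq_mul, Complex.star_def, _root_.map_mul, map_zero, map_natCast,
      Complex.conj_ofReal, map_inv₀, map_pow, i1, hcx, pow_succ, mul_inv]
    rw [← hy]
    field_simp
    ring
  have e10 : Λ₂ 1 0 = ((L : ℂ) * x * (1 - y) - (L : ℂ) ^ 2 * (r : ℂ) ^ 2) / (x * (1 - y)) := by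
    simp only [Λ₂, hAinv, Matrix.sub_apply, Matrix.mul_apply, Matrix.smul_apply,
      Matrix.conjTranspose_apply, Fin.sum_univ_two, B₂, C₂,
      Matrix.of_apply, Matrix.cons_val', Matrix.cons_val_zero, Matrix.cons_val_one,
      Matrix.head_cons, Matrix.head_fin_const, Matrix.cons_val_fin_one, Matrix.empty_val',
      smul_eq_mul, Complex.star_def, _root_.map_mul, map_zero, map_natCast,
      Complex.conj_ofReal, map_inv₀, map_pow, i1, hcx, pow_succ, mul_inv]
    rw [← hy]
    field_simp
    ring
  have haux : y ^ 3 * x ^ 4 - y ^ 4 * x ^ 4 ≠ 0 := by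
    have h : y ^ 3 * x ^ 4 - y ^ 4 * x ^ 4 = y ^ 3 * x ^ 4 * (1 - y) := by ring
    rw [h]
    exact mul_ne_zero (mul_ne_zero (pow_ne_zero _ hyne) (pow_ne_zero _ hx)) hKy
  have e11 : Λ₂ 1 1 =
      ((L : ℂ) * (1 + (L : ℂ) * (r : ℂ) ^ 2) * (1 - y) - (L : ℂ) ^ 2 * (r : ℂ) ^ 2) /
        (x ^ 2 * y * (1 - y)) := by
    simp only [Λ₂, hAinv, Matrix.sub_apply, Matrix.mul_apply, Matrix.smul_apply,
      Matrix.conjTranspose_apply, Fin.sum_univ_two, B₂, C₂,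
      Matrix.of_apply, Matrix.cons_val', Matrix.cons_val_zero, Matrix.cons_val_one,
      Matrix.head_cons, Matrix.head_fin_const, Matrix.cons_val_fin_one, Matrix.empty_val',
      smul_eq_mul, Complex.star_def, _root_.map_mul, map_zero, map_natCast,
      Complex.conj_ofReal, map_inv₀, map_pow, i1, hcx, pow_succ, mul_inv]
    rw [← hy]
    field_simp
    ring
  have hxx : x ^ 2 ≠ 0 := pow_ne_zero _ hx
  have hKy2 : (1 - y) ^ 2 ≠ 0 := pow_ne_zero _ hKy
  have hKy3 : (1 - y) ^ 3 ≠ 0 := pow_ne_zero _ hKy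
  have hD1 : (1 - y) * (x ^ 2 * y * (1 - y)) ≠ 0 :=
    mul_ne_zero hKy (mul_ne_zero (mul_ne_zero hxx hyne) hKy)
  have hD2 : x * (1 - y) * (x * (1 - y)) ≠ 0 :=
    mul_ne_zero (mul_ne_zero hx hKy) (mul_ne_zero hx hKy)
  have hD4 : x ^ 2 * y * (1 - y) ^ 2 ≠ 0 := mul_ne_zero (mul_ne_zero hxx hyne) hKy2
  have hK2 : Λ₂ 0 0 * Λ₂ 1 1 + Λ₂ 0 1 * Λ₂ 1 0 =
      (((L : ℂ) * (1 - y) - (L : ℂ) ^ 2 * (r : ℂ) ^ 2 * y) *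
          ((L : ℂ) * (1 + (L : ℂ) * (r : ℂ) ^ 2) * (1 - y) - (L : ℂ) ^ 2 * (r : ℂ) ^ 2) +
        ((L : ℂ) * x * (1 - y) - (L : ℂ) ^ 2 * (r : ℂ) ^ 2) *
          ((L : ℂ) * x * (1 - y) - (L : ℂ) ^ 2 * (r : ℂ) ^ 2) * y) /
        (x ^ 2 * y * (1 - y) ^ 2) := by
    rw [e00, e01, e10, e11]
    simp only [div_mul_div_comm]
    rw [div_add_div _ _ hD1 hD2, div_eq_div_iff (mul_ne_zero hD1 hD2) hD4]
    ring
  rw [hK2, hdet, i2,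
    show x ^ (3 * L + 2) = (x ^ L) ^ 3 * x ^ 2 by ring,
    show x ^ (2 * L) = (x ^ L) ^ 2 by ring, ← hy, ← div_eq_mul_inv,
    div_mul_eq_mul_div, ← mul_div_assoc, div_div_eq_mul_div, div_mul_eq_mul_div, div_div,
    div_eq_div_iff (mul_ne_zero hD4 (mul_ne_zero (pow_ne_zero 2 hL0) hKy)) hKy3]
  simp only [hr4, hr2]
  ring
end

section
/- Fix an integer L ≥ 1 and let k₂^{(L)}(r) = [ (1−r²)^{3L+2} + ((L²−2L−2)r⁴ + (4L+4)r² − 1)·(1−r²)^{2L} + ((L+1)²r⁴ − (4L+2)r² − 1)·(1−r²)^{L} + 1 ] / (1 − (1−r²)^L)³ for 0 < r < 1. Then k₂^{(L)}(r) vanishes quadratically at r = 0: lim_{r→0⁺} k₂^{(L)}(r)/r² = (L+1)²/(2L). (Zeros of the SU(1,1) random analytic function exhibit quadratic repulsion at small distances.) -/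
/-- The normalized two-point correlation function of zeros of the `SU(1,1)` random
analytic function with parameter `L`, as a function of the pseudohyperbolic
distance `r`. -/
noncomputable def k₂ (L : ℕ) (r : ℝ) : ℝ :=
  ((1 - r ^ 2) ^ (3 * L + 2) +
      (((L : ℝ) ^ 2 - 2 * L - 2) * r ^ 4 + (4 * L + 4) * r ^ 2 - 1) * (1 - r ^ 2) ^ (2 * L) +
      (((L : ℝ) + 1) ^ 2 * r ^ 4 - (4 * L + 2) * r ^ 2 - 1) * (1 - r ^ 2) ^ L + 1) /
    (1 - (1 - r ^ 2) ^ L) ^ 3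

/-- Auxiliary: `(1 - (1-r²)^L) / r²` as an honest polynomial expression. -/
noncomputable def Qf (L : ℕ) (r : ℝ) : ℝ := ∑ i ∈ Finset.range L, (1 - r ^ 2) ^ i

/-- Auxiliary: `(L - Qf L r) / r²` as an honest polynomial expression. -/
noncomputable def Rf (L : ℕ) (r : ℝ) : ℝ :=
  ∑ i ∈ Finset.range L, ∑ j ∈ Finset.range i, (1 - r ^ 2) ^ j

/-- Auxiliary: the numerator of `k₂` divided by `r^8`. -/
noncomputable def Pf (L : ℕ) (r : ℝ) : ℝ :=
  2 * Rf L r ^ 2 - Rf L r * Qf L r * (3 * (L : ℝ) - 2 - Qf L r) +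
    ((L : ℝ) - 1) ^ 2 * Qf L r ^ 2 + 2 * Qf L r ^ 3 - r ^ 2 * Qf L r ^ 3

lemma hgeom (n : ℕ) (s : ℝ) :
    1 - (1 - s ^ 2) ^ n = s ^ 2 * ∑ i ∈ Finset.range n, (1 - s ^ 2) ^ i := by
  have h := geom_sum_mul (1 - s ^ 2) n
  linear_combination h

lemma hQR (L : ℕ) (s : ℝ) : Qf L s = (L : ℝ) - s ^ 2 * Rf L s := by
  have h : s ^ 2 * Rf L s = ∑ i ∈ Finset.range L, (1 - (1 - s ^ 2) ^ i) := by
    rw [Rf, Finset.mul_sum]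
    exact Finset.sum_congr rfl fun i _ => (hgeom i s).symm
  rw [Finset.sum_sub_distrib, Finset.sum_const, Finset.card_range, nsmul_eq_mul, mul_one] at h
  rw [Qf]
  linarith [h]

lemma hNum (L : ℕ) (s : ℝ) :
    (1 - s ^ 2) ^ (3 * L + 2) +
      (((L : ℝ) ^ 2 - 2 * L - 2) * s ^ 4 + (4 * L + 4) * s ^ 2 - 1) * (1 - s ^ 2) ^ (2 * L) +
      (((L : ℝ) + 1) ^ 2 * s ^ 4 - (4 * L + 2) * s ^ 2 - 1) * (1 - s ^ 2) ^ L + 1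
      = s ^ 8 * Pf L s := by
  have h3 : (1 - s ^ 2) ^ (3 * L + 2) = ((1 - s ^ 2) ^ L) ^ 3 * (1 - s ^ 2) ^ 2 := by
    rw [pow_add]; congr 1; rw [mul_comm, pow_mul]
  have h2 : (1 - s ^ 2) ^ (2 * L) = ((1 - s ^ 2) ^ L) ^ 2 := by rw [mul_comm, pow_mul]
  have ha : (1 - s ^ 2) ^ L = 1 - s ^ 2 * Qf L s := by
    have := hgeom L s; rw [Qf]; linarith [this]
  rw [h3, h2, ha, Pf, hQR L s]
  ring

lemma hEq (L : ℕ) (s : ℝ) (hs : s ≠ 0) : k₂ L s / s ^ 2 = Pf L s / Qf L s ^ 3 := by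
  have hD : (1 - (1 - s ^ 2) ^ L) ^ 3 = (s ^ 2 * Qf L s) ^ 3 := by rw [hgeom L s, Qf]
  rw [k₂, hNum, hD, div_div]
  have hcalc : (s ^ 2 * Qf L s) ^ 3 * s ^ 2 = s ^ 8 * Qf L s ^ 3 := by ring
  rw [hcalc]
  exact mul_div_mul_left _ _ (pow_ne_zero 8 hs)

/-- Quadratic repulsion between zeros:
`k₂^{(L)}(r)/r² → (L+1)²/(2L)` as `r → 0⁺`. -/
theorem su11_quadratic_repulsion (L : ℕ) (hL : 1 ≤ L) :
    Filter.Tendsto (fun r : ℝ => k₂ L r / r ^ 2) (nhdsWithin 0 (Set.Ioi 0))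
      (nhds (((L : ℝ) + 1) ^ 2 / (2 * L))) := by
  have hL0 : (L : ℝ) ≠ 0 := Nat.cast_ne_zero.mpr (by omega)
  have cQ : Continuous (Qf L) := by
    unfold Qf; fun_prop
  have cR : Continuous (Rf L) := by
    unfold Rf; fun_prop
  have cP : Continuous (Pf L) := by
    unfold Pf; fun_prop
  have hQ0 : Qf L 0 = (L : ℝ) := by
    simp [Qf]
  have hR0 : Rf L 0 = (L : ℝ) * ((L : ℝ) - 1) / 2 := by
    have key := Finset.sum_range_id_mul_two L
    have h2 := congrArg (Nat.cast : ℕ → ℝ) key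
    push_cast [Nat.cast_sub hL] at h2
    simp only [Rf]
    norm_num
    linarith
  have hval : Pf L 0 / Qf L 0 ^ 3 = ((L : ℝ) + 1) ^ 2 / (2 * L) := by
    rw [Pf, hQ0, hR0]
    field_simp
    ring
  have hcont : ContinuousAt (fun s => Pf L s / Qf L s ^ 3) 0 := by
    apply ContinuousAt.div cP.continuousAt ((cQ.pow 3).continuousAt)
    rw [Pi.pow_apply, hQ0]
    exact pow_ne_zero 3 hL0
  have htend : Filter.Tendsto (fun s => Pf L s / Qf L s ^ 3) (nhdsWithin 0 (Set.Ioi 0))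
      (nhds (((L : ℝ) + 1) ^ 2 / (2 * L))) := by
    rw [← hval]
    exact hcont.tendsto.mono_left nhdsWithin_le_nhds
  refine htend.congr' ?_
  filter_upwards [self_mem_nhdsWithin] with s hs
  exact (hEq L s (ne_of_gt hs)).symm
end

section
/- Fix integers N ≥ 0 and L ≥ 1. For all complex numbers z, z' with |z| > 1 and |z'| < 1, the following bound holds: | z^{−N} · (C(N+L−1, N))^{−1/2} · ∑_{m=0}^{N} C(L+m−1, m)·(z·conj(z'))^m | ≤ C(N+L, N) · ( max{ |z|^{−1}, |z'| } )^N, where C(·,·) denotes the binomial coefficient. (This estimate shows that the covariance between the inner and outer zeros of the SU(1,1) random polynomial of degree N decays geometrically, so inner and outer zeros become independent as N → ∞.) -/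
open ComplexConjugate

lemma sum_choose_aux (N L : ℕ) (hL : 1 ≤ L) :
    ∑ m ∈ Finset.range (N + 1), Nat.choose (L + m - 1) m = Nat.choose (N + L) N := by
  induction N with
  | zero => simp
  | succ n ih =>
      rw [Finset.sum_range_succ, ih]
      have h1 : L + (n + 1) - 1 = n + L := by omega
      have h2 : n + 1 + L = (n + L) + 1 := by omega
      rw [h1, h2, Nat.choose_succ_succ]


/-- The covariance between the inner and outer zeros of the `SU(1,1)` random
polynomial of degree `N` decays geometrically: for `|z| > 1` and `|z'| < 1`,
`|z^{-N} C(N+L-1, N)^{-1/2} ∑_{m=0}^{N} C(L+m-1, m)(z conj(z'))^m|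
  ≤ C(N+L, N) (max{|z|⁻¹, |z'|})^N`. -/
theorem su11_inner_outer_covariance_bound (N L : ℕ) (hL : 1 ≤ L) (z z' : ℂ)
    (hz : 1 < ‖z‖) (hz' : ‖z'‖ < 1) :
    ‖(z ^ N)⁻¹ * ((Real.sqrt (Nat.choose (N + L - 1) N) : ℂ))⁻¹ *
        ∑ m ∈ Finset.range (N + 1),
          (Nat.choose (L + m - 1) m : ℂ) * (z * conj z') ^ m‖ ≤
      (Nat.choose (N + L) N : ℝ) * max ‖z‖⁻¹ ‖z'‖ ^ N := by
  set r := max ‖z‖⁻¹ ‖z'‖ with hrdef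
  have hz0 : (0:ℝ) < ‖z‖ := lt_trans one_pos hz
  have hr1 : ‖z‖⁻¹ ≤ r := le_max_left _ _
  have hr2 : ‖z'‖ ≤ r := le_max_right _ _
  have hr0 : 0 ≤ r := le_trans (norm_nonneg z') hr2
  have hC1 : (1:ℝ) ≤ (Nat.choose (N + L - 1) N : ℝ) := by
    have h : N ≤ N + L - 1 := by omega
    exact_mod_cast Nat.choose_pos h
  have hsqrt : (1:ℝ) ≤ Real.sqrt (Nat.choose (N + L - 1) N) := by
    rw [show (1:ℝ) = Real.sqrt 1 by simp]
    exact Real.sqrt_le_sqrt hC1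
  have hinv : ‖((Real.sqrt (Nat.choose (N + L - 1) N) : ℂ))⁻¹‖ ≤ 1 := by
    rw [norm_inv, Complex.norm_real, Real.norm_eq_abs, abs_of_nonneg (by linarith)]
    exact inv_le_one_of_one_le₀ hsqrt
  rw [norm_mul, norm_mul, norm_inv, norm_pow]
  calc (‖z‖ ^ N)⁻¹ * ‖((Real.sqrt (Nat.choose (N + L - 1) N) : ℂ))⁻¹‖ *
        ‖∑ m ∈ Finset.range (N + 1),
          (Nat.choose (L + m - 1) m : ℂ) * (z * conj z') ^ m‖
      ≤ (‖z‖ ^ N)⁻¹ * 1 *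
        (∑ m ∈ Finset.range (N + 1),
          (Nat.choose (L + m - 1) m : ℝ) * (‖z‖ * ‖z'‖) ^ m) := by
        apply mul_le_mul
        · exact mul_le_mul_of_nonneg_left hinv (by positivity)
        · refine le_trans (norm_sum_le _ _) ?_
          apply Finset.sum_le_sum
          intro m _
          rw [norm_mul, norm_pow, norm_mul, Complex.norm_conj, Complex.norm_natCast]
        · exact norm_nonneg _
        · positivity
    _ = ∑ m ∈ Finset.range (N + 1),
          (Nat.choose (L + m - 1) m : ℝ) * ((‖z‖ * ‖z'‖) ^ m * (‖z‖ ^ N)⁻¹) := by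
        rw [mul_one, Finset.mul_sum]
        refine Finset.sum_congr rfl fun m _ => by ring
    _ ≤ ∑ m ∈ Finset.range (N + 1), (Nat.choose (L + m - 1) m : ℝ) * r ^ N := by
        apply Finset.sum_le_sum
        intro m hm
        have hmN : m ≤ N := by
          have := Finset.mem_range.mp hm; omega
        apply mul_le_mul_of_nonneg_left _ (by positivity)
        have key : (‖z‖ * ‖z'‖) ^ m * (‖z‖ ^ N)⁻¹
            = ‖z'‖ ^ m * (‖z‖⁻¹) ^ (N - m) := by
          rw [mul_pow]
          have hN : N = m + (N - m) := by omega
          rw [hN, pow_add, mul_inv, ← inv_pow]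
          field_simp
          have h1 : ∀ k : ℕ, ‖z‖ ^ k * ‖z‖⁻¹ ^ k = 1 := fun k => by
            rw [← mul_pow, mul_inv_cancel₀ hz0.ne', one_pow]
          rw [Nat.add_sub_cancel_left]
          linear_combination (‖z'‖ ^ m) * (h1 m - h1 (N - m))
        rw [key]
        have hNm : N = m + (N - m) := by omega
        calc ‖z'‖ ^ m * (‖z‖⁻¹) ^ (N - m)
            ≤ r ^ m * r ^ (N - m) := by
              apply mul_le_mul (pow_le_pow_left₀ (norm_nonneg _) hr2 m)
                (pow_le_pow_left₀ (by positivity) hr1 _) (by positivity) (by positivity)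
          _ = r ^ N := by rw [← pow_add, ← hNm]
    _ = (Nat.choose (N + L) N : ℝ) * r ^ N := by
        rw [← Finset.sum_mul]
        congr 1
        exact_mod_cast sum_choose_aux N L hL
end
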